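/- Let ρ be a density matrix and P an orthogonal projector with tr(Pρ) > 0. Then the fidelity between ρ and ρ' = PρP/tr(Pρ) equals √(tr(Pρ)), i.e., tr√(√ρ · ρ' · √ρ) = √(tr(Pρ)). -/

import Mathlib

open Matrix
open scoped Kronecker Matrix.Norms.L2Operator ComplexOrder

/-- The square root of a positive semidefinite matrix, as defined in the older Mathlib
(removed since). -/
noncomputable def Matrix.PosSemidef.sqrt {n : Type*} {𝕜 : Type*} [Fintype n] [RCLike 𝕜]
    [DecidableEq n] {A : Matrix n n 𝕜} (hA : A.PosSemidef) : Matrix n n 𝕜 :=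
  (hA.1.eigenvectorUnitary : Matrix n n 𝕜) * diagonal (((↑) : ℝ → 𝕜) ∘ (√·) ∘ hA.1.eigenvalues) *
    (star hA.1.eigenvectorUnitary : Matrix n n 𝕜)

noncomputable section

/-- Trace norm `‖A‖₁ = tr √(Aᴴ A)`. -/
noncomputable def traceNorm {m : ℕ} (A : Matrix (Fin m) (Fin m) ℂ) : ℝ :=
  ((Matrix.posSemidef_conjTranspose_mul_self A).sqrt.trace).re

/-- Quadratic form `Re ⟨v, H v⟩`. -/
noncomputable def quadForm {m : Type*} [Fintype m] (H : Matrix m m ℂ) (v : m → ℂ) : ℝ :=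
  (dotProduct (star v) (H *ᵥ v)).re

/-- Squared Euclidean norm of a vector. -/
noncomputable def vnormSq {m : Type*} [Fintype m] (v : m → ℂ) : ℝ :=
  (dotProduct (star v) v).re

open scoped MatrixOrder in
lemma Matrix.PosSemidef.sqrt_eq_cfcSqrt {n : ℕ} {A : Matrix (Fin n) (Fin n) ℂ}
    (hA : A.PosSemidef) : hA.sqrt = CFC.sqrt A := by
  have h0 : 0 ≤ A := Matrix.nonneg_iff_posSemidef.mpr hA
  rw [CFC.sqrt_eq_real_sqrt A, cfcₙ_eq_cfc (hf0 := Real.sqrt_zero), hA.1.cfc_eq]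
  simp [Matrix.IsHermitian.cfc, Matrix.PosSemidef.sqrt]

open scoped MatrixOrder in
lemma Matrix.PosSemidef.sqrt_mul_self {n : ℕ} {A : Matrix (Fin n) (Fin n) ℂ}
    (hA : A.PosSemidef) : hA.sqrt * hA.sqrt = A := by
  rw [hA.sqrt_eq_cfcSqrt]
  exact CFC.sqrt_mul_sqrt_self A (Matrix.nonneg_iff_posSemidef.mpr hA)

open scoped MatrixOrder in
lemma Matrix.PosSemidef.posSemidef_sqrt {n : ℕ} {A : Matrix (Fin n) (Fin n) ℂ}
    (hA : A.PosSemidef) : hA.sqrt.PosSemidef := by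
  rw [hA.sqrt_eq_cfcSqrt]
  exact Matrix.nonneg_iff_posSemidef.mp (CFC.sqrt_nonneg A)

open scoped MatrixOrder in
lemma Matrix.PosSemidef.eq_sqrt_of_sq_eq {n : ℕ} {A B : Matrix (Fin n) (Fin n) ℂ}
    (hB : B.PosSemidef) (hA : A.PosSemidef) (h : B ^ 2 = A) : B = hA.sqrt := by
  rw [hA.sqrt_eq_cfcSqrt]
  exact (CFC.sqrt_unique (by rw [← sq]; exact h) (Matrix.nonneg_iff_posSemidef.mpr hB)).symm

lemma smul_posSemidef {n : ℕ} {M : Matrix (Fin n) (Fin n) ℂ} (hM : M.PosSemidef)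
    {c : ℝ} (hc : 0 ≤ c) : ((c : ℂ) • M).PosSemidef := by
  rw [Matrix.posSemidef_iff_dotProduct_mulVec]
  constructor
  · unfold Matrix.IsHermitian
    rw [conjTranspose_smul, hM.1]
    simp
  · intro x
    rw [smul_mulVec, dotProduct_smul, smul_eq_mul]
    have h := hM.dotProduct_mulVec_nonneg x
    rw [Complex.le_def] at h ⊢
    have him : (star x ⬝ᵥ M *ᵥ x).im = 0 := (h.2).symm
    constructor
    · simp only [Complex.mul_re, Complex.ofReal_re, Complex.ofReal_im, Complex.zero_re, him,
        mul_zero, zero_mul, sub_zero]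
      exact mul_nonneg hc h.1
    · simp [Complex.mul_im, him]

/-- fidelity between `ρ` and `ρ' = PρP/tr(Pρ)` equals `√(tr(Pρ))`, i.e.
`tr √(√ρ · ρ' · √ρ) = √(tr(Pρ))`. -/
theorem fidelity_projected_state {n : ℕ} (ρ P ρ' : Matrix (Fin n) (Fin n) ℂ)
    (hρ : ρ.PosSemidef) (hρ1 : ρ.trace = 1)
    (hPherm : P.IsHermitian) (hPidem : P * P = P)
    (hPρ : 0 < ((P * ρ).trace).re)
    (hρ' : ρ' = ((P * ρ).trace)⁻¹ • (P * ρ * P))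
    (hpsd : (hρ.sqrt * ρ' * hρ.sqrt).PosSemidef) :
    (hpsd.sqrt.trace).re = Real.sqrt (((P * ρ).trace).re) := by
  set S := hρ.sqrt with hSdef
  have hSS : S * S = ρ := hρ.sqrt_mul_self
  have hSh : S.IsHermitian := hρ.posSemidef_sqrt.1
  set t := (P * ρ).trace with htdef
  set u := t.re with hudef
  -- t is real
  have hPρP : (P * ρ * P).IsHermitian := by
    have := (hρ.conjTranspose_mul_mul_same P).1
    rwa [hPherm.eq] at this
  have htrcyc : (P * ρ * P).trace = t := by
    rw [Matrix.trace_mul_cycle, hPidem]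
  have ht : t = (u : ℂ) := by
    have h1 : star ((P * ρ * P).trace) = (P * ρ * P).trace := by
      rw [← Matrix.trace_conjTranspose, hPρP.eq]
    rw [htrcyc] at h1
    exact (Complex.conj_eq_iff_re.mp h1).symm
  have hu : 0 < u := hPρ
  -- A = √ρ P √ρ is PSD
  have hA : (S * P * S).PosSemidef := by
    have h := Matrix.posSemidef_conjTranspose_mul_self (P * S)
    have : (P * S)ᴴ * (P * S) = S * P * S := by
      rw [conjTranspose_mul, hSh.eq, hPherm.eq, mul_assoc, ← mul_assoc P P S, hPidem,
        ← mul_assoc]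
    rwa [this] at h
  set s : ℝ := (Real.sqrt u)⁻¹ with hsdef
  have hs0 : 0 < s := inv_pos.mpr (Real.sqrt_pos.mpr hu)
  set B := (s : ℂ) • (S * P * S) with hBdef
  have hB : B.PosSemidef := smul_posSemidef hA hs0.le
  have hB2 : B ^ 2 = S * ρ' * S := by
    have hs2 : (s : ℂ) * s = (u : ℂ)⁻¹ := by
      rw [← Complex.ofReal_mul, hsdef, ← mul_inv, Real.mul_self_sqrt hu.le, Complex.ofReal_inv]
    have hmat : (S * P * S) ^ 2 = S * (P * ρ * P) * S := by
      have h1 : (S * P * S) ^ 2 = S * P * (S * S) * P * S := by rw [pow_two]; noncomm_ring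
      rw [h1, hSS]; noncomm_ring
    rw [hBdef, hρ', ht, smul_pow, sq ((s:ℂ)), hs2, hmat, mul_smul_comm, smul_mul_assoc]
  have hsqrt : hpsd.sqrt = B := (hB.eq_sqrt_of_sq_eq hpsd hB2).symm
  have htrA : (S * P * S).trace = (u : ℂ) := by
    rw [Matrix.trace_mul_cycle, hSS, Matrix.trace_mul_comm, ← ht]
  rw [hsqrt, hBdef, Matrix.trace_smul, smul_eq_mul, htrA, ← Complex.ofReal_mul,
    Complex.ofReal_re, hsdef]
  rw [inv_mul_eq_div, Real.div_sqrt]
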